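/- Let G be a linear oriented hypergraph on a nonempty finite vertex set V and finite edge set E with incidence matrix H, and let U be any uniformly oriented hypergraph with the same underlying hypergraph as G, i.e., U has incidence matrix H_U with σ_U(v,e) ≠ 0 exactly when σ(v,e) ≠ 0, and for each edge e all nonzero entries of column e of H_U are equal. Then λ_1(H Hᵀ) ≤ λ_1(H_U H_Uᵀ), where λ_1 denotes the largest eigenvalue of a real symmetric matrix. -/

import Mathlib

open Matrix Finset

lemma quad_le_sup_eigenvalues {n : Type*} [Fintype n] [DecidableEq n] [Nonempty n]
    {A : Matrix n n ℝ} (hA : A.IsHermitian) (y : n → ℝ) (hy : y ⬝ᵥ y = 1) :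
    y ⬝ᵥ A *ᵥ y ≤ Finset.univ.sup' Finset.univ_nonempty hA.eigenvalues := by
  set U : Matrix n n ℝ := (hA.eigenvectorUnitary : Matrix n n ℝ) with hU
  have hUU : U * star U = 1 := (Matrix.mem_unitaryGroup_iff).mp hA.eigenvectorUnitary.2
  set z : n → ℝ := star U *ᵥ y with hz
  have hrw : ∀ (w : n → ℝ), y ⬝ᵥ U *ᵥ w = z ⬝ᵥ w := by
    intro w
    rw [Matrix.dotProduct_mulVec, hz]
    congr 1
    rw [Matrix.star_eq_conjTranspose, Matrix.conjTranspose_eq_transpose_of_trivial,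
      Matrix.mulVec_transpose]
  have hz1 : z ⬝ᵥ z = 1 := by
    have : z ⬝ᵥ z = y ⬝ᵥ U *ᵥ z := (hrw z).symm
    rw [this, hz, Matrix.mulVec_mulVec, hUU, Matrix.one_mulVec, hy]
  have hform : y ⬝ᵥ A *ᵥ y = ∑ i, hA.eigenvalues i * (z i * z i) := by
    conv_lhs => rw [hA.spectral_theorem, Unitary.conjStarAlgAut_apply]
    rw [← Matrix.mulVec_mulVec, ← Matrix.mulVec_mulVec, hrw]
    rw [← hz]
    simp [dotProduct, Matrix.mulVec_diagonal, RCLike.ofReal_real_eq_id]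
    ring_nf
    exact Finset.sum_congr rfl fun i _ => by ring
  rw [hform]
  calc ∑ i, hA.eigenvalues i * (z i * z i)
      ≤ ∑ i, (Finset.univ.sup' Finset.univ_nonempty hA.eigenvalues) * (z i * z i) := by
        refine Finset.sum_le_sum fun i _ => ?_
        exact mul_le_mul_of_nonneg_right (Finset.le_sup' _ (Finset.mem_univ i))
          (mul_self_nonneg _)
    _ = Finset.univ.sup' Finset.univ_nonempty hA.eigenvalues := by
        rw [← Finset.mul_sum]
        simp only [dotProduct] at hz1
        rw [hz1, mul_one]


/-- For a linear oriented hypergraph with incidence matrix `H` and any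
uniformly oriented hypergraph `U` with the same underlying hypergraph (incidence matrix
`HU` with the same support, each column of `HU` having all nonzero entries equal),
the largest Laplacian eigenvalue satisfies `λ_1(H Hᵀ) ≤ λ_1(HU HUᵀ)`. -/
theorem laplacian_spectral_radius_le_uniformly_oriented
    {V E : Type*} [Fintype V] [Fintype E] [DecidableEq V] [Nonempty V]
    (H HU : Matrix V E ℝ)
    (hH : ∀ v e, H v e = -1 ∨ H v e = 0 ∨ H v e = 1)
    (hHU : ∀ v e, HU v e = -1 ∨ HU v e = 0 ∨ HU v e = 1)
    (hlin : ∀ e f : E, e ≠ f →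
      (Finset.univ.filter (fun v => H v e ≠ 0 ∧ H v f ≠ 0)).card ≤ 1)
    (hsupp : ∀ v e, HU v e ≠ 0 ↔ H v e ≠ 0)
    (hunif : ∀ (e : E) (v w : V), HU v e ≠ 0 → HU w e ≠ 0 → HU v e = HU w e)
    (hL : (H * Hᵀ).IsHermitian) (hLU : (HU * HUᵀ).IsHermitian) :
    Finset.univ.sup' Finset.univ_nonempty hL.eigenvalues ≤
      Finset.univ.sup' Finset.univ_nonempty hLU.eigenvalues := by
  -- abs values agree
  have habs1 : ∀ v e (M : Matrix V E ℝ), (M v e = -1 ∨ M v e = 0 ∨ M v e = 1) →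
      M v e ≠ 0 → |M v e| = 1 := by
    rintro v e M (h | h | h) hne <;> simp [h] at *
  have habs : ∀ v e, |H v e| = |HU v e| := by
    intro v e
    by_cases h0 : H v e = 0
    · have : HU v e = 0 := by
        by_contra hne; exact ((hsupp v e).mp hne) h0
      simp [h0, this]
    · rw [habs1 v e H (hH v e) h0, habs1 v e HU (hHU v e) ((hsupp v e).mpr h0)]
  -- the maximal eigenvector of L
  obtain ⟨i₀, -, hi₀⟩ := Finset.exists_mem_eq_sup' Finset.univ_nonempty hL.eigenvalues
  set x : V → ℝ := ⇑(hL.eigenvectorBasis i₀) with hxdef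
  have hx1 : x ⬝ᵥ x = 1 := by
    have hn := hL.eigenvectorBasis.orthonormal.1 i₀
    have : @inner ℝ _ _ (hL.eigenvectorBasis i₀) (hL.eigenvectorBasis i₀) = 1 := by
      rw [real_inner_self_eq_norm_sq, hn]; norm_num
    simp only [PiLp.inner_apply, RCLike.inner_apply, conj_trivial] at this
    simpa only [dotProduct, mul_comm] using this
  have hsup : Finset.univ.sup' Finset.univ_nonempty hL.eigenvalues = x ⬝ᵥ (H * Hᵀ) *ᵥ x := by
    rw [hi₀, hL.eigenvalues_eq i₀]
    simp only [RCLike.re_to_real, star_trivial]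
    rfl
  -- quadratic form as sum of squares
  have hquad : ∀ (M : Matrix V E ℝ) (w : V → ℝ),
      w ⬝ᵥ (M * Mᵀ) *ᵥ w = ∑ e, (∑ v, M v e * w v) * (∑ v, M v e * w v) := by
    intro M w
    rw [← Matrix.mulVec_mulVec, Matrix.dotProduct_mulVec, ← Matrix.mulVec_transpose]
    simp [dotProduct, Matrix.mulVec, dotProduct, mul_comm]
  set y : V → ℝ := fun v => |x v| with hydef
  have hy1 : y ⬝ᵥ y = 1 := by
    simpa [dotProduct, hydef, abs_mul_abs_self] using hx1
  -- per-edge comparison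
  have hedge : ∀ e, (∑ v, H v e * x v) * (∑ v, H v e * x v) ≤
      (∑ v, HU v e * y v) * (∑ v, HU v e * y v) := by
    intro e
    have h1 : |∑ v, H v e * x v| ≤ ∑ v, |HU v e| * y v := by
      refine (Finset.abs_sum_le_sum_abs _ _).trans ?_
      refine le_of_eq (Finset.sum_congr rfl fun v _ => ?_)
      rw [abs_mul, habs v e]
    have h3 : |∑ v, HU v e * y v| = ∑ v, |HU v e| * y v := by
      by_cases hex : ∃ w, HU w e ≠ 0
      · obtain ⟨w, hw⟩ := hex
        have hc : |HU w e| = 1 := habs1 w e HU (hHU w e) hw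
        have hcol : ∀ v, HU v e = HU w e * |HU v e| := by
          intro v
          by_cases hv : HU v e = 0
          · simp [hv]
          · rw [habs1 v e HU (hHU v e) hv, mul_one]
            exact hunif e v w hv hw
        have : ∑ v, HU v e * y v = HU w e * ∑ v, |HU v e| * y v := by
          rw [Finset.mul_sum]
          refine Finset.sum_congr rfl fun v _ => ?_
          conv_lhs => rw [hcol v]
          ring
        rw [this, abs_mul, hc, one_mul, abs_of_nonneg]
        exact Finset.sum_nonneg fun v _ => mul_nonneg (abs_nonneg _) (abs_nonneg _)
      · push_neg at hex
        simp [hex]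
    have key : |∑ v, H v e * x v| ≤ |∑ v, HU v e * y v| := by rw [h3]; exact h1
    calc (∑ v, H v e * x v) * (∑ v, H v e * x v)
        = |∑ v, H v e * x v| * |∑ v, H v e * x v| := (abs_mul_abs_self _).symm
      _ ≤ |∑ v, HU v e * y v| * |∑ v, HU v e * y v| :=
          mul_le_mul key key (abs_nonneg _) (abs_nonneg _)
      _ = (∑ v, HU v e * y v) * (∑ v, HU v e * y v) := abs_mul_abs_self _
  calc Finset.univ.sup' Finset.univ_nonempty hL.eigenvalues
      = x ⬝ᵥ (H * Hᵀ) *ᵥ x := hsup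
    _ = ∑ e, (∑ v, H v e * x v) * (∑ v, H v e * x v) := hquad H x
    _ ≤ ∑ e, (∑ v, HU v e * y v) * (∑ v, HU v e * y v) :=
        Finset.sum_le_sum fun e _ => hedge e
    _ = y ⬝ᵥ (HU * HUᵀ) *ᵥ y := (hquad HU y).symm
    _ ≤ Finset.univ.sup' Finset.univ_nonempty hLU.eigenvalues :=
        quad_le_sup_eigenvalues hLU y hy1
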